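/- Let X_1, …, X_K be square-integrable real random variables on a common probability space, with means μ_i := E[X_i], and set V_{ij} := Var(X_i − X_j). Define Λ'_{ij} ∈ [0, ∞] by Λ'_{ij} := V_{ij}/(μ_j − μ_i)² if μ_j > μ_i and Λ'_{ij} := +∞ otherwise. Then for all i, j, k ∈ {1, …, K}: Λ'_{ij} ≤ max{Λ'_{ik}, Λ'_{kj}}. -/

import Mathlib

open MeasureTheory ProbabilityTheory ENNReal

private lemma evariance_eq_sq_eLpNorm {Ω : Type*} [MeasurableSpace Ω] (P : Measure Ω)
    (f : Ω → ℝ) :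
    evariance f P = (eLpNorm (fun ω => f ω - ∫ ω, f ω ∂P) 2 P) ^ 2 := by
  rw [eLpNorm_eq_lintegral_rpow_enorm_toReal two_ne_zero ENNReal.ofNat_ne_top]
  rw [← ENNReal.rpow_natCast _ 2, ← ENNReal.rpow_mul]
  simp only [ENNReal.toReal_ofNat, one_div, Nat.cast_ofNat]
  rw [inv_mul_cancel₀ (two_ne_zero), ENNReal.rpow_one, evariance]
  simp_rw [← ENNReal.rpow_natCast _ 2]
  norm_num

private lemma sqrt_variance_add_le {Ω : Type*} [MeasurableSpace Ω] (P : Measure Ω)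
    [IsProbabilityMeasure P] (f g : Ω → ℝ) (hf : MemLp f 2 P) (hg : MemLp g 2 P) :
    Real.sqrt (variance (f + g) P) ≤
      Real.sqrt (variance f P) + Real.sqrt (variance g P) := by
  set F : Ω → ℝ := fun ω => f ω - ∫ ω, f ω ∂P with hF
  set G : Ω → ℝ := fun ω => g ω - ∫ ω, g ω ∂P with hG
  have hFm : MemLp F 2 P := hf.sub (memLp_const _)
  have hGm : MemLp G 2 P := hg.sub (memLp_const _)
  have hint : ∫ ω, (f ω + g ω) ∂P = (∫ ω, f ω ∂P) + ∫ ω, g ω ∂P :=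
    integral_add (hf.integrable one_le_two) (hg.integrable one_le_two)
  have hcent : (fun ω => (f + g) ω - ∫ ω, (f + g) ω ∂P) = F + G := by
    funext ω
    simp only [Pi.add_apply, hF, hG]
    rw [hint]
    ring
  have htri : eLpNorm (F + G) 2 P ≤ eLpNorm F 2 P + eLpNorm G 2 P :=
    eLpNorm_add_le hFm.1 hGm.1 one_le_two
  have hFfin : eLpNorm F 2 P ≠ ⊤ := hFm.2.ne
  have hGfin : eLpNorm G 2 P ≠ ⊤ := hGm.2.ne
  have hvf : Real.sqrt (variance f P) = (eLpNorm F 2 P).toReal := by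
    rw [variance, evariance_eq_sq_eLpNorm, ENNReal.toReal_pow, ← hF]
    exact Real.sqrt_sq ENNReal.toReal_nonneg
  have hvg : Real.sqrt (variance g P) = (eLpNorm G 2 P).toReal := by
    rw [variance, evariance_eq_sq_eLpNorm, ENNReal.toReal_pow, ← hG]
    exact Real.sqrt_sq ENNReal.toReal_nonneg
  have hvfg : Real.sqrt (variance (f + g) P) = (eLpNorm (F + G) 2 P).toReal := by
    rw [variance, evariance_eq_sq_eLpNorm, hcent, ENNReal.toReal_pow]
    exact Real.sqrt_sq ENNReal.toReal_nonneg
  rw [hvf, hvg, hvfg, ← ENNReal.toReal_add hFfin hGfin]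
  exact ENNReal.toReal_mono (by simp [hFfin, hGfin, ENNReal.add_ne_top]) htri

/-- Ultra-metric property of the quantities `Λ'_{ij} = V_{ij}/(μ_j - μ_i)²`
(with value `+∞` when `μ_j ≤ μ_i`), where `V_{ij} = Var(X_i - X_j)`. -/
theorem ultrametric_Lambda' {Ω : Type*} [MeasurableSpace Ω]
    (P : Measure Ω) [IsProbabilityMeasure P] (K : ℕ)
    (X : Fin K → Ω → ℝ) (hX : ∀ i, MemLp (X i) 2 P)
    (μ : Fin K → ℝ) (hμ : ∀ i, μ i = ∫ ω, X i ω ∂P)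
    (V : Fin K → Fin K → ℝ)
    (hV : ∀ i j, V i j = variance (fun ω => X i ω - X j ω) P)
    (Λ' : Fin K → Fin K → ℝ≥0∞)
    (hΛ' : ∀ i j, Λ' i j =
      if μ i < μ j then ENNReal.ofReal (V i j / (μ j - μ i) ^ 2) else ⊤)
    (i j k : Fin K) :
    Λ' i j ≤ max (Λ' i k) (Λ' k j) := by
  by_cases hij : μ i < μ j
  swap
  · rw [hΛ' i j, if_neg hij]
    by_cases hik : μ i < μ k
    · have : ¬ μ k < μ j := fun h => hij (hik.trans h)
      rw [hΛ' k j, if_neg this]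
      exact le_max_of_le_right le_rfl
    · rw [hΛ' i k, if_neg hik]
      exact le_max_of_le_left le_rfl
  by_cases hik : μ i < μ k
  swap
  · rw [hΛ' i k, if_neg hik]; exact le_max_of_le_left le_top
  by_cases hkj : μ k < μ j
  swap
  · rw [hΛ' k j, if_neg hkj]; exact le_max_of_le_right le_top
  -- main case: μ i < μ k < μ j
  rw [hΛ' i j, hΛ' i k, hΛ' k j, if_pos hij, if_pos hik, if_pos hkj]
  have key : V i j / (μ j - μ i) ^ 2 ≤
      max (V i k / (μ k - μ i) ^ 2) (V k j / (μ j - μ k) ^ 2) := ?_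
  · rcases le_max_iff.mp key with h | h
    · exact le_max_of_le_left (ENNReal.ofReal_le_ofReal h)
    · exact le_max_of_le_right (ENNReal.ofReal_le_ofReal h)
  -- σ notation
  set σij := Real.sqrt (V i j) with hσij
  set σik := Real.sqrt (V i k) with hσik
  set σkj := Real.sqrt (V k j) with hσkj
  have hVnn : ∀ a b, 0 ≤ V a b := fun a b => (hV a b) ▸ variance_nonneg _ _
  have hsq : ∀ a b, V a b = Real.sqrt (V a b) ^ 2 := fun a b =>
    (Real.sq_sqrt (hVnn a b)).symm
  have htri : σij ≤ σik + σkj := by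
    have h1 : MemLp (fun ω => X i ω - X k ω) 2 P := (hX i).sub (hX k)
    have h2 : MemLp (fun ω => X k ω - X j ω) 2 P := (hX k).sub (hX j)
    have := sqrt_variance_add_le P _ _ h1 h2
    have heq : ((fun ω => X i ω - X k ω) + fun ω => X k ω - X j ω)
        = fun ω => X i ω - X j ω := by
      funext ω; simp only [Pi.add_apply]; ring
    rw [heq] at this
    rw [hσij, hσik, hσkj, hV i j, hV i k, hV k j]
    exact this
  set a := μ k - μ i with ha
  set b := μ j - μ k with hb
  have ha0 : 0 < a := sub_pos.mpr hik
  have hb0 : 0 < b := sub_pos.mpr hkj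
  have hab : μ j - μ i = a + b := by rw [ha, hb]; ring
  rw [hab, hsq i j, hsq i k, hsq k j, ← hσij, ← hσik, ← hσkj]
  set m := max (σik / a) (σkj / b) with hm
  have hm0 : 0 ≤ m := le_max_of_le_left (by positivity)
  have h1 : σik ≤ m * a := by
    rw [← div_le_iff₀ ha0]; exact le_max_left _ _
  have h2 : σkj ≤ m * b := by
    rw [← div_le_iff₀ hb0]; exact le_max_right _ _
  have hσm : σij ≤ m * (a + b) := by
    calc σij ≤ σik + σkj := htri
    _ ≤ m * a + m * b := add_le_add h1 h2
    _ = m * (a + b) := by ring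
  have hL : σij ^ 2 / (a + b) ^ 2 ≤ m ^ 2 := by
    rw [div_le_iff₀ (by positivity)]
    have hσnn : 0 ≤ σij := Real.sqrt_nonneg _
    nlinarith [mul_self_nonneg (m * (a+b) - σij)]
  refine hL.trans ?_
  have : m ^ 2 = max ((σik / a) ^ 2) ((σkj / b) ^ 2) := by
    rcases max_cases (σik / a) (σkj / b) with ⟨h, hle⟩ | ⟨h, hlt⟩
    · rw [hm, h, max_eq_left]
      exact pow_le_pow_left₀ (by positivity) hle 2
    · rw [hm, h, max_eq_right]
      exact pow_le_pow_left₀ (by positivity) hlt.le 2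
  rw [this, div_pow, div_pow]
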